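/- Let (H, ·, ∘) be a Hopf brace and define g⇀h := S(g₍₁₎)·(g₍₂₎∘h). Then for all g,h ∈ H: (i) g∘h = g₍₁₎·(g₍₂₎⇀h), and (ii) g·h = g₍₁₎∘(T(g₍₂₎)⇀h), where T is the antipode of (H, ∘). -/

import Mathlib

open scoped TensorProduct
open Coalgebra

variable (R H : Type*) [CommRing R] [AddCommGroup H] [Module R H] [Coalgebra R H]

/-- A Hopf algebra structure (multiplication, unit, antipode) on the coalgebra `H`:
the multiplication is associative with unit, comultiplication and counit are algebra
maps, and `S` is an antipode (expressed via arbitrary Sweedler representations). -/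
structure HopfMul where
  mul : H →ₗ[R] H →ₗ[R] H
  one : H
  S : H →ₗ[R] H
  mul_assoc : ∀ a b c : H, mul (mul a b) c = mul a (mul b c)
  one_mul : ∀ a : H, mul one a = a
  mul_one : ∀ a : H, mul a one = a
  comul_mul : ∀ (a b : H) {ι κ : Type} (ra : Coalgebra.Repr R a ι) (rb : Coalgebra.Repr R b κ),
    comul (R := R) (mul a b) = ∑ i ∈ ra.index, ∑ j ∈ rb.index,
      mul (ra.left i) (rb.left j) ⊗ₜ[R] mul (ra.right i) (rb.right j)
  comul_one : comul (R := R) one = one ⊗ₜ[R] one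
  counit_mul : ∀ a b : H, counit (R := R) (mul a b) = counit (R := R) a * counit (R := R) b
  counit_one : counit (R := R) one = 1
  S_mul_left : ∀ (a : H) {ι : Type} (r : Coalgebra.Repr R a ι),
    ∑ i ∈ r.index, mul (S (r.left i)) (r.right i) = counit (R := R) a • one
  S_mul_right : ∀ (a : H) {ι : Type} (r : Coalgebra.Repr R a ι),
    ∑ i ∈ r.index, mul (r.left i) (S (r.right i)) = counit (R := R) a • one

/-- A Hopf brace: two Hopf algebra structures `dot` (written `·`) and `circ` (written `∘`)
on the same coalgebra `H`, satisfying `g∘(h·ℓ) = (g₍₁₎∘h)·S(g₍₂₎)·(g₍₃₎∘ℓ)`. -/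
structure HopfBrace where
  dot : HopfMul R H
  circ : HopfMul R H
  compat : ∀ (g h ℓ : H) {ι : Type} {κ : ι → Type} (r : Coalgebra.Repr R g ι)
      (r2 : ∀ i : ι, Coalgebra.Repr R (r.right i) (κ i)),
    circ.mul g (dot.mul h ℓ) = ∑ i ∈ r.index, ∑ j ∈ (r2 i).index,
      dot.mul (dot.mul (circ.mul (r.left i) h) (dot.S ((r2 i).left j)))
        (circ.mul ((r2 i).right j) ℓ)

section Aux
variable {R H}

theorem sum_counit_smul' {ι : Type*} {a : H} (r : Coalgebra.Repr R a ι) :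
    ∑ i ∈ r.index, counit (R := R) (r.left i) • r.right i = a := by
  have h2 := congrArg (TensorProduct.lid R H) (Coalgebra.sum_counit_tmul_eq r)
  rw [map_sum] at h2
  simp only [TensorProduct.lid_tmul] at h2
  simpa using h2

theorem sum_smul_counit' {ι : Type*} {a : H} (r : Coalgebra.Repr R a ι) :
    ∑ i ∈ r.index, counit (R := R) (r.right i) • r.left i = a := by
  have h2 := congrArg (TensorProduct.rid R H) (Coalgebra.sum_tmul_counit_eq r)
  rw [map_sum] at h2
  simp only [TensorProduct.rid_tmul] at h2
  simpa using h2

theorem tri' {N : Type*} [AddCommGroup N] [Module R N]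
    (Φ : H ⊗[R] (H ⊗[R] H) →ₗ[R] N) {ι : Type*} {κ Λ : ι → Type*} {a : H}
    (r : Coalgebra.Repr R a ι)
    (rL : ∀ i : ι, Coalgebra.Repr R (r.left i) (κ i))
    (rR : ∀ i : ι, Coalgebra.Repr R (r.right i) (Λ i)) :
    ∑ i ∈ r.index, ∑ j ∈ (rL i).index,
      Φ ((rL i).left j ⊗ₜ[R] ((rL i).right j ⊗ₜ[R] r.right i))
    = ∑ i ∈ r.index, ∑ j ∈ (rR i).index,
      Φ (r.left i ⊗ₜ[R] ((rR i).left j ⊗ₜ[R] (rR i).right j)) := by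
  have h2 := congrArg Φ (Coalgebra.sum_tmul_tmul_eq r rL rR)
  rw [map_sum, map_sum] at h2
  simp only [map_sum] at h2
  exact h2

section Conv
variable {A : Type*} [AddCommGroup A] [Module R A]

noncomputable def conv' (mA : A →ₗ[R] A →ₗ[R] A) (f g : H →ₗ[R] A) : H →ₗ[R] A :=
  TensorProduct.lift mA ∘ₗ TensorProduct.map f g ∘ₗ comul

noncomputable def cunit' (oA : A) : H →ₗ[R] A where
  toFun a := counit (R := R) a • oA
  map_add' x y := by simp [add_smul]
  map_smul' c x := by simp [mul_smul]

theorem cunit'_apply (oA : A) (a : H) : (cunit' oA : H →ₗ[R] A) a = counit (R := R) a • oA := rfl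

theorem conv'_repr (mA : A →ₗ[R] A →ₗ[R] A) (f g : H →ₗ[R] A) {ι : Type*} {a : H}
    (r : Coalgebra.Repr R a ι) :
    conv' mA f g a = ∑ i ∈ r.index, mA (f (r.left i)) (g (r.right i)) := by
  rw [conv']
  simp only [LinearMap.comp_apply, ← r.eq, map_sum, TensorProduct.map_tmul,
    TensorProduct.lift.tmul]

theorem conv'_assoc (mA : A →ₗ[R] A →ₗ[R] A)
    (hA : ∀ x y z : A, mA (mA x y) z = mA x (mA y z)) (f g k : H →ₗ[R] A) :
    conv' mA (conv' mA f g) k = conv' mA f (conv' mA g k) := by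
  ext a
  set Φ : H ⊗[R] (H ⊗[R] H) →ₗ[R] A :=
    TensorProduct.lift mA ∘ₗ
      TensorProduct.map (TensorProduct.lift mA ∘ₗ TensorProduct.map f g) k ∘ₗ
      (TensorProduct.assoc R H H H).symm.toLinearMap with hΦ
  have hΦt : ∀ x y z : H, Φ (x ⊗ₜ[R] (y ⊗ₜ[R] z)) = mA (mA (f x) (g y)) (k z) := by
    intro x y z
    simp [hΦ, TensorProduct.assoc_symm_tmul]
  set r := ℛ R a
  rw [conv'_repr mA _ k r, conv'_repr mA f _ r]
  calc ∑ i ∈ r.index, mA (conv' mA f g (r.left i)) (k (r.right i))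
      = ∑ i ∈ r.index, ∑ j ∈ (ℛ R (r.left i)).index,
          Φ ((ℛ R (r.left i)).left j ⊗ₜ[R] ((ℛ R (r.left i)).right j ⊗ₜ[R] r.right i)) := by
        refine Finset.sum_congr rfl fun i _ => ?_
        rw [conv'_repr mA f g (ℛ R (r.left i)), map_sum, LinearMap.sum_apply]
        exact Finset.sum_congr rfl fun j _ => (hΦt _ _ _).symm
    _ = ∑ i ∈ r.index, ∑ j ∈ (ℛ R (r.right i)).index,
          Φ (r.left i ⊗ₜ[R] ((ℛ R (r.right i)).left j ⊗ₜ[R] (ℛ R (r.right i)).right j)) :=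
        tri' Φ r _ _
    _ = ∑ i ∈ r.index, mA (f (r.left i)) (conv' mA g k (r.right i)) := by
        refine Finset.sum_congr rfl fun i _ => ?_
        rw [conv'_repr mA g k (ℛ R (r.right i)), map_sum]
        exact Finset.sum_congr rfl fun j _ => by rw [hΦt, hA]

theorem conv'_cunit_left (mA : A →ₗ[R] A →ₗ[R] A) (oA : A)
    (h1 : ∀ x : A, mA oA x = x) (f : H →ₗ[R] A) :
    conv' mA (cunit' oA) f = f := by
  ext a
  set r := ℛ R a
  rw [conv'_repr mA _ f r]
  calc ∑ i ∈ r.index, mA (cunit' oA (r.left i)) (f (r.right i))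
      = ∑ i ∈ r.index, counit (R := R) (r.left i) • f (r.right i) := by
        refine Finset.sum_congr rfl fun i _ => ?_
        rw [cunit'_apply, map_smul, LinearMap.smul_apply, h1]
    _ = f a := by
        conv_rhs => rw [← sum_counit_smul' r]
        rw [map_sum]
        simp only [map_smul]
    
theorem conv'_cunit_right (mA : A →ₗ[R] A →ₗ[R] A) (oA : A)
    (h1 : ∀ x : A, mA x oA = x) (f : H →ₗ[R] A) :
    conv' mA f (cunit' oA) = f := by
  ext a
  set r := ℛ R a
  rw [conv'_repr mA f _ r]
  calc ∑ i ∈ r.index, mA (f (r.left i)) (cunit' oA (r.right i))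
      = ∑ i ∈ r.index, counit (R := R) (r.right i) • f (r.left i) := by
        refine Finset.sum_congr rfl fun i _ => ?_
        rw [cunit'_apply, map_smul, h1]
    _ = f a := by
        conv_rhs => rw [← sum_smul_counit' r]
        rw [map_sum]
        simp only [map_smul]

theorem conv'_inv_unique (mA : A →ₗ[R] A →ₗ[R] A) (oA : A)
    (hA : ∀ x y z : A, mA (mA x y) z = mA x (mA y z))
    (h1 : ∀ x : A, mA oA x = x) (h1' : ∀ x : A, mA x oA = x)
    {f a b : H →ₗ[R] A} (hb : conv' mA a f = cunit' oA) (hc : conv' mA f b = cunit' oA) :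
    a = b := by
  have := conv'_assoc mA hA a f b
  rw [hb, hc, conv'_cunit_left mA oA h1, conv'_cunit_right mA oA h1'] at this
  exact this.symm

end Conv

universe w'

/-- lift -/
noncomputable def liftRepr {ι : Type*} {a : H} (r : Coalgebra.Repr R a ι) :
    Coalgebra.Repr R a (ULift.{w'} (Fin r.index.card)) where
  index := Finset.univ
  left := fun i => r.left (r.index.equivFin.symm i.down).1
  right := fun i => r.right (r.index.equivFin.symm i.down).1
  eq := by
    rw [← r.eq, ← Finset.sum_coe_sort r.index
      (fun x => r.left x ⊗ₜ[R] r.right x)]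
    rw [← Equiv.sum_comp (Equiv.ulift.trans r.index.equivFin.symm)
      (fun x : r.index => r.left x.1 ⊗ₜ[R] r.right x.1)]
    rfl

section HM

theorem liftRepr_left {ι : Type*} {a : H} (r : Coalgebra.Repr R a ι) (i : ULift.{w'} (Fin r.index.card)) :
    (liftRepr.{w'} r).left i = r.left (r.index.equivFin.symm i.down).1 := rfl

theorem liftRepr_right {ι : Type*} {a : H} (r : Coalgebra.Repr R a ι) (i : ULift.{w'} (Fin r.index.card)) :
    (liftRepr.{w'} r).right i = r.right (r.index.equivFin.symm i.down).1 := rfl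

theorem liftRepr_sum' {N : Type*} [AddCommMonoid N] {ι : Type*} {a : H} (r : Coalgebra.Repr R a ι)
    (F : ι → N) :
    ∑ i ∈ (liftRepr r).index, F (r.index.equivFin.symm i.down).1
      = ∑ i ∈ r.index, F i := by
  rw [← Finset.sum_coe_sort r.index F,
    ← Equiv.sum_comp (Equiv.ulift.trans r.index.equivFin.symm) (fun x : r.index => F x.1)]
  rfl

theorem liftRepr_sum {N : Type*} [AddCommMonoid N] {ι : Type*} {a : H} (r : Coalgebra.Repr R a ι)
    (B : H → H → N) :
    ∑ i ∈ (liftRepr r).index, B ((liftRepr r).left i) ((liftRepr r).right i)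
      = ∑ i ∈ r.index, B (r.left i) (r.right i) :=
  liftRepr_sum' r (fun i => B (r.left i) (r.right i))

theorem S_mul_left' (M : HopfMul R H) {ι : Type*} {a : H} (r : Coalgebra.Repr R a ι) :
    ∑ i ∈ r.index, M.mul (M.S (r.left i)) (r.right i) = counit (R := R) a • M.one := by
  rw [← liftRepr_sum r (fun x y => M.mul (M.S x) y)]
  exact M.S_mul_left a (liftRepr r)

theorem S_mul_right' (M : HopfMul R H) {ι : Type*} {a : H} (r : Coalgebra.Repr R a ι) :
    ∑ i ∈ r.index, M.mul (r.left i) (M.S (r.right i)) = counit (R := R) a • M.one := by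
  rw [← liftRepr_sum r (fun x y => M.mul x (M.S y))]
  exact M.S_mul_right a (liftRepr r)

theorem comul_mul' (M : HopfMul R H) (a b : H) {ι κ : Type*} (ra : Coalgebra.Repr R a ι)
    (rb : Coalgebra.Repr R b κ) :
    comul (R := R) (M.mul a b) = ∑ i ∈ ra.index, ∑ j ∈ rb.index,
      M.mul (ra.left i) (rb.left j) ⊗ₜ[R] M.mul (ra.right i) (rb.right j) := by
  rw [M.comul_mul a b (liftRepr ra) (liftRepr rb)]
  rw [liftRepr_sum ra (fun x y => ∑ j ∈ (liftRepr rb).index,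
    M.mul x ((liftRepr rb).left j) ⊗ₜ[R] M.mul y ((liftRepr rb).right j))]
  exact Finset.sum_congr rfl fun i _ =>
    liftRepr_sum rb (fun x y => M.mul (ra.left i) x ⊗ₜ[R] M.mul (ra.right i) y)

theorem compat' (Br : HopfBrace R H) (g h ℓ : H) {ι : Type*} {κ : ι → Type*}
    (r : Coalgebra.Repr R g ι)
    (r2 : ∀ i : ι, Coalgebra.Repr R (r.right i) (κ i)) :
    Br.circ.mul g (Br.dot.mul h ℓ) = ∑ i ∈ r.index, ∑ j ∈ (r2 i).index,
      Br.dot.mul (Br.dot.mul (Br.circ.mul (r.left i) h) (Br.dot.S ((r2 i).left j)))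
        (Br.circ.mul ((r2 i).right j) ℓ) := by
  rw [Br.compat g h ℓ (liftRepr r)
    (fun i => liftRepr (r2 (r.index.equivFin.symm i.down).1))]
  simp only [liftRepr_left, liftRepr_right]
  rw [liftRepr_sum' r (fun i => ∑ j ∈ (liftRepr (r2 i)).index,
      Br.dot.mul (Br.dot.mul (Br.circ.mul (r.left i) h)
          (Br.dot.S ((r2 i).left ((r2 i).index.equivFin.symm j.down).1)))
        (Br.circ.mul ((r2 i).right ((r2 i).index.equivFin.symm j.down).1) ℓ))]
  exact Finset.sum_congr rfl fun i _ => liftRepr_sum' (r2 i) (fun j =>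
    Br.dot.mul (Br.dot.mul (Br.circ.mul (r.left i) h) (Br.dot.S ((r2 i).left j)))
      (Br.circ.mul ((r2 i).right j) ℓ))

theorem HM_conv_S_id (M : HopfMul R H) : conv' M.mul M.S LinearMap.id = cunit' M.one := by
  ext a
  rw [conv'_repr _ _ _ (ℛ R a), cunit'_apply]
  simpa using S_mul_left' M (ℛ R a)

theorem HM_conv_id_S (M : HopfMul R H) : conv' M.mul LinearMap.id M.S = cunit' M.one := by
  ext a
  rw [conv'_repr _ _ _ (ℛ R a), cunit'_apply]
  simpa using S_mul_right' M (ℛ R a)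

theorem Br_one_eq (Br : HopfBrace R H) : Br.circ.one = Br.dot.one := by
  set u : H →ₗ[R] H := Br.circ.mul.flip Br.dot.one with hu
  have key : ∀ g : H,
      conv' Br.dot.mul u (conv' Br.dot.mul Br.dot.S LinearMap.id) g = g := by
    intro g
    have hc := compat' Br g Br.dot.one Br.circ.one (ℛ R g) (fun i => ℛ R ((ℛ R g).right i))
    rw [Br.dot.one_mul] at hc
    simp only [Br.circ.mul_one] at hc
    simp only [Br.dot.mul_assoc] at hc
    rw [conv'_repr _ u _ (ℛ R g)]
    conv_rhs => rw [hc]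
    refine Finset.sum_congr rfl fun i _ => ?_
    rw [conv'_repr _ Br.dot.S LinearMap.id (ℛ R ((ℛ R g).right i)), map_sum]
    simp [u]
  have hu_id : u = LinearMap.id := by
    have h3 : conv' Br.dot.mul u (conv' Br.dot.mul Br.dot.S LinearMap.id) = u := by
      rw [HM_conv_S_id Br.dot]
      exact conv'_cunit_right _ _ Br.dot.mul_one u
    rw [← h3]
    exact LinearMap.ext key
  have := congrFun (congrArg (fun f : H →ₗ[R] H => (f : H → H)) hu_id) Br.circ.one
  simpa [u, Br.circ.one_mul] using this.symm

end HM


section Br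
variable (Br : HopfBrace R H)

/-- Componentwise `∘`-multiplication on `H ⊗ H`. -/
noncomputable def m2 : (H ⊗[R] H) →ₗ[R] (H ⊗[R] H) →ₗ[R] H ⊗[R] H :=
  TensorProduct.curry
    (TensorProduct.map (TensorProduct.lift Br.circ.mul) (TensorProduct.lift Br.circ.mul) ∘ₗ
      (TensorProduct.tensorTensorTensorComm R H H H H).toLinearMap)

theorem m2_tmul (a b x y : H) :
    m2 Br (a ⊗ₜ[R] b) (x ⊗ₜ[R] y) = Br.circ.mul a x ⊗ₜ[R] Br.circ.mul b y := by
  simp [m2, TensorProduct.tensorTensorTensorComm_tmul]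

theorem m2_one_left (z : H ⊗[R] H) :
    m2 Br (Br.circ.one ⊗ₜ[R] Br.circ.one) z = z := by
  induction z using TensorProduct.induction_on with
  | zero => simp
  | tmul x y => simp [m2_tmul, Br.circ.one_mul]
  | add u v hu hv => simp [map_add, hu, hv]

theorem m2_one_right (z : H ⊗[R] H) :
    m2 Br z (Br.circ.one ⊗ₜ[R] Br.circ.one) = z := by
  induction z using TensorProduct.induction_on with
  | zero => simp
  | tmul x y => simp [m2_tmul, Br.circ.mul_one]
  | add u v hu hv => simp [map_add, LinearMap.add_apply, hu, hv]

theorem m2_assoc (u v w : H ⊗[R] H) :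
    m2 Br (m2 Br u v) w = m2 Br u (m2 Br v w) := by
  induction u using TensorProduct.induction_on with
  | zero => simp
  | add u1 u2 h1 h2 => simp [map_add, LinearMap.add_apply, h1, h2]
  | tmul a b =>
    induction v using TensorProduct.induction_on with
    | zero => simp
    | add v1 v2 h1 h2 => simp [map_add, LinearMap.add_apply, h1, h2]
    | tmul x y =>
      induction w using TensorProduct.induction_on with
      | zero => simp
      | add w1 w2 h1 h2 => simp [map_add, h1, h2]
      | tmul p q => simp [m2_tmul, Br.circ.mul_assoc]

theorem comul_circ_mul (a b : H) :
    comul (R := R) (Br.circ.mul a b) = m2 Br (comul a) (comul b) := by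
  rw [comul_mul' Br.circ a b (ℛ R a) (ℛ R b), ← (ℛ R a).eq, ← (ℛ R b).eq]
  simp only [map_sum, LinearMap.coe_sum, Finset.sum_apply, m2_tmul]
  exact Finset.sum_comm

/-- `g ↦ Σ T(g₂) ⊗ T(g₁)`. -/
noncomputable def Tφ : H →ₗ[R] H ⊗[R] H :=
  (TensorProduct.comm R H H).toLinearMap ∘ₗ
    TensorProduct.map Br.circ.S Br.circ.S ∘ₗ comul

theorem Tφ_repr {ι : Type*} {x : H} (rx : Coalgebra.Repr R x ι) :
    Tφ Br x = ∑ k ∈ rx.index, Br.circ.S (rx.right k) ⊗ₜ[R] Br.circ.S (rx.left k) := by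
  rw [Tφ]
  simp only [LinearMap.comp_apply, ← rx.eq, map_sum, TensorProduct.map_tmul]
  exact Finset.sum_congr rfl fun i _ => rfl

theorem comul_conv_comulT :
    conv' (m2 Br) (comul : H →ₗ[R] H ⊗[R] H) (comul ∘ₗ Br.circ.S)
      = cunit' (Br.circ.one ⊗ₜ[R] Br.circ.one) := by
  ext g
  rw [conv'_repr _ _ _ (ℛ R g), cunit'_apply]
  calc ∑ i ∈ (ℛ R g).index,
        m2 Br (comul ((ℛ R g).left i)) ((comul ∘ₗ Br.circ.S) ((ℛ R g).right i))
      = ∑ i ∈ (ℛ R g).index,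
          comul (R := R) (Br.circ.mul ((ℛ R g).left i) (Br.circ.S ((ℛ R g).right i))) := by
        exact Finset.sum_congr rfl fun i _ => (comul_circ_mul Br _ _).symm
    _ = comul (R := R) (∑ i ∈ (ℛ R g).index,
          Br.circ.mul ((ℛ R g).left i) (Br.circ.S ((ℛ R g).right i))) := by rw [map_sum]
    _ = counit (R := R) g • (Br.circ.one ⊗ₜ[R] Br.circ.one) := by
        rw [S_mul_right' Br.circ (ℛ R g), map_smul, Br.circ.comul_one]

theorem Tφ_conv_comul :
    conv' (m2 Br) (Tφ Br) (comul : H →ₗ[R] H ⊗[R] H)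
      = cunit' (Br.circ.one ⊗ₜ[R] Br.circ.one) := by
  ext g
  rw [conv'_repr _ _ _ (ℛ R g), cunit'_apply]
  set CT : H ⊗[R] H →ₗ[R] H :=
    TensorProduct.lift Br.circ.mul ∘ₗ TensorProduct.map Br.circ.S LinearMap.id with hCT
  have hCTt : ∀ u v : H, CT (u ⊗ₜ[R] v) = Br.circ.mul (Br.circ.S u) v := by
    intro u v; simp [hCT]
  set Φ₁ : H ⊗[R] (H ⊗[R] H) →ₗ[R] H ⊗[R] H :=
    TensorProduct.map CT CT ∘ₗ (TensorProduct.tensorTensorTensorComm R H H H H).toLinearMap ∘ₗ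
      TensorProduct.map (TensorProduct.comm R H H).toLinearMap LinearMap.id ∘ₗ
      (TensorProduct.assoc R H H (H ⊗[R] H)).symm.toLinearMap ∘ₗ
      LinearMap.lTensor H (LinearMap.lTensor H comul) with hΦ₁
  have hΦ₁t : ∀ x y z : H, Φ₁ (x ⊗ₜ[R] (y ⊗ₜ[R] z)) =
      ∑ l ∈ (ℛ R z).index, Br.circ.mul (Br.circ.S y) ((ℛ R z).left l) ⊗ₜ[R]
        Br.circ.mul (Br.circ.S x) ((ℛ R z).right l) := by
    intro x y z
    rw [hΦ₁]
    simp only [LinearMap.comp_apply, LinearMap.lTensor_tmul, ← (ℛ R z).eq,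
      TensorProduct.tmul_sum, map_sum]
    refine Finset.sum_congr rfl fun l _ => ?_
    simp [hCTt, TensorProduct.assoc_symm_tmul, TensorProduct.tensorTensorTensorComm_tmul]
  calc ∑ i ∈ (ℛ R g).index, m2 Br (Tφ Br ((ℛ R g).left i)) (comul ((ℛ R g).right i))
      = ∑ i ∈ (ℛ R g).index, ∑ k ∈ (ℛ R ((ℛ R g).left i)).index,
          Φ₁ ((ℛ R ((ℛ R g).left i)).left k ⊗ₜ[R]
            ((ℛ R ((ℛ R g).left i)).right k ⊗ₜ[R] (ℛ R g).right i)) := by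
        refine Finset.sum_congr rfl fun i _ => ?_
        rw [Tφ_repr Br (ℛ R ((ℛ R g).left i)), map_sum, LinearMap.coe_sum,
          Finset.sum_apply]
        refine Finset.sum_congr rfl fun k _ => ?_
        rw [hΦ₁t]
        conv_lhs => rw [← (ℛ R ((ℛ R g).right i)).eq]
        rw [map_sum]
        exact Finset.sum_congr rfl fun l _ => m2_tmul Br _ _ _ _
    _ = ∑ i ∈ (ℛ R g).index, ∑ k ∈ (ℛ R ((ℛ R g).right i)).index,
          Φ₁ ((ℛ R g).left i ⊗ₜ[R]
            ((ℛ R ((ℛ R g).right i)).left k ⊗ₜ[R] (ℛ R ((ℛ R g).right i)).right k)) :=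
        tri' Φ₁ (ℛ R g) _ _
    _ = ∑ i ∈ (ℛ R g).index,
          TensorProduct.mk R H H Br.circ.one
            (Br.circ.mul (Br.circ.S ((ℛ R g).left i)) ((ℛ R g).right i)) := by
        refine Finset.sum_congr rfl fun i _ => ?_
        set Φ₂ : H ⊗[R] (H ⊗[R] H) →ₗ[R] H ⊗[R] H :=
          TensorProduct.map CT (Br.circ.mul (Br.circ.S ((ℛ R g).left i))) ∘ₗ
            (TensorProduct.assoc R H H H).symm.toLinearMap with hΦ₂
        have hΦ₂t : ∀ u v w : H, Φ₂ (u ⊗ₜ[R] (v ⊗ₜ[R] w)) =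
            Br.circ.mul (Br.circ.S u) v ⊗ₜ[R]
              Br.circ.mul (Br.circ.S ((ℛ R g).left i)) w := by
          intro u v w
          rw [hΦ₂]
          simp only [LinearMap.comp_apply, LinearEquiv.coe_coe,
            TensorProduct.assoc_symm_tmul, TensorProduct.map_tmul, hCTt]
        calc ∑ k ∈ (ℛ R ((ℛ R g).right i)).index,
              Φ₁ ((ℛ R g).left i ⊗ₜ[R]
                ((ℛ R ((ℛ R g).right i)).left k ⊗ₜ[R] (ℛ R ((ℛ R g).right i)).right k))
            = ∑ k ∈ (ℛ R ((ℛ R g).right i)).index,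
                ∑ l ∈ (ℛ R ((ℛ R ((ℛ R g).right i)).right k)).index,
                  Φ₂ ((ℛ R ((ℛ R g).right i)).left k ⊗ₜ[R]
                    ((ℛ R ((ℛ R ((ℛ R g).right i)).right k)).left l ⊗ₜ[R]
                      (ℛ R ((ℛ R ((ℛ R g).right i)).right k)).right l)) := by
              refine Finset.sum_congr rfl fun k _ => ?_
              rw [hΦ₁t]
              exact Finset.sum_congr rfl fun l _ => (hΦ₂t _ _ _).symm
          _ = ∑ k ∈ (ℛ R ((ℛ R g).right i)).index,
                ∑ l ∈ (ℛ R ((ℛ R ((ℛ R g).right i)).left k)).index,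
                  Φ₂ ((ℛ R ((ℛ R ((ℛ R g).right i)).left k)).left l ⊗ₜ[R]
                    ((ℛ R ((ℛ R ((ℛ R g).right i)).left k)).right l ⊗ₜ[R]
                      (ℛ R ((ℛ R g).right i)).right k)) :=
              (tri' Φ₂ (ℛ R ((ℛ R g).right i)) _ _).symm
          _ = ∑ k ∈ (ℛ R ((ℛ R g).right i)).index,
                counit (R := R) ((ℛ R ((ℛ R g).right i)).left k) •
                  TensorProduct.mk R H H Br.circ.one
                    (Br.circ.mul (Br.circ.S ((ℛ R g).left i))
                      ((ℛ R ((ℛ R g).right i)).right k)) := by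
              refine Finset.sum_congr rfl fun k _ => ?_
              rw [Finset.sum_congr rfl fun l _ => hΦ₂t _ _ _]
              rw [← TensorProduct.sum_tmul, S_mul_left' Br.circ
                (ℛ R ((ℛ R ((ℛ R g).right i)).left k))]
              simp [TensorProduct.smul_tmul', TensorProduct.mk_apply]
          _ = TensorProduct.mk R H H Br.circ.one
                (Br.circ.mul (Br.circ.S ((ℛ R g).left i)) ((ℛ R g).right i)) := by
              conv_rhs => rw [← sum_counit_smul' (ℛ R ((ℛ R g).right i)), map_sum, map_sum]
              exact Finset.sum_congr rfl fun k _ => by rw [map_smul, map_smul]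
    _ = counit (R := R) g • (Br.circ.one ⊗ₜ[R] Br.circ.one) := by
        rw [← map_sum, S_mul_left' Br.circ (ℛ R g), map_smul]
        rfl

theorem Tcomul (g : H) :
    comul (R := R) (Br.circ.S g) = Tφ Br g := by
  have h := conv'_inv_unique (m2 Br) (Br.circ.one ⊗ₜ[R] Br.circ.one) (m2_assoc Br)
    (m2_one_left Br) (m2_one_right Br) (Tφ_conv_comul Br) (comul_conv_comulT Br)
  exact (LinearMap.congr_fun h g).symm

/-- Representation of `T g` obtained from one of `g`. -/
noncomputable def TRepr {ι : Type*} {g : H} (r : Coalgebra.Repr R g ι) :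
    Coalgebra.Repr R (Br.circ.S g) ι where
  index := r.index
  left := fun i => Br.circ.S (r.right i)
  right := fun i => Br.circ.S (r.left i)
  eq := by rw [Tcomul Br g, Tφ_repr Br r]

theorem TRepr_index {ι : Type*} {g : H} (r : Coalgebra.Repr R g ι) :
    (TRepr Br r).index = r.index := rfl

theorem TRepr_left {ι : Type*} {g : H} (r : Coalgebra.Repr R g ι) (i : ι) :
    (TRepr Br r).left i = Br.circ.S (r.right i) := rfl

theorem TRepr_right {ι : Type*} {g : H} (r : Coalgebra.Repr R g ι) (i : ι) :
    (TRepr Br r).right i = Br.circ.S (r.left i) := rfl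

/-- The action `g ⇀ h = S(g₁)·(g₂∘h)` as a linear map in `g`. -/
noncomputable def ActM (h : H) : H →ₗ[R] H :=
  conv' Br.dot.mul Br.dot.S (Br.circ.mul.flip h)

theorem ActM_repr (h : H) {ι : Type*} {g : H} (r : Coalgebra.Repr R g ι) :
    ActM Br h g = ∑ i ∈ r.index,
      Br.dot.mul (Br.dot.S (r.left i)) (Br.circ.mul (r.right i) h) := by
  rw [ActM, conv'_repr _ _ _ r]
  rfl

theorem i_map (h : H) :
    conv' Br.dot.mul LinearMap.id (ActM Br h) = Br.circ.mul.flip h := by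
  rw [ActM, ← conv'_assoc Br.dot.mul Br.dot.mul_assoc, HM_conv_id_S Br.dot,
    conv'_cunit_left _ _ Br.dot.one_mul]

theorem actT_eq (h : H) :
    ActM Br h ∘ₗ Br.circ.S = conv' Br.circ.mul Br.circ.S (Br.dot.mul.flip h) := by
  ext g
  rw [LinearMap.comp_apply, ActM_repr Br h (TRepr Br (ℛ R g)),
    conv'_repr _ _ _ (ℛ R g)]
  simp only [TRepr_index, TRepr_left, TRepr_right]
  symm
  set pB : (H ⊗[R] H) ⊗[R] H →ₗ[R] H :=
    TensorProduct.lift Br.dot.mul ∘ₗ (TensorProduct.comm R H H).toLinearMap ∘ₗ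
      TensorProduct.map (Br.dot.S ∘ₗ Br.circ.S)
        (TensorProduct.lift Br.circ.mul ∘ₗ TensorProduct.map Br.circ.S LinearMap.id) ∘ₗ
      (TensorProduct.assoc R H H H).toLinearMap with hpB
  have hpBt : ∀ u v z : H, pB ((u ⊗ₜ[R] v) ⊗ₜ[R] z) =
      Br.dot.mul (Br.circ.mul (Br.circ.S v) z) (Br.dot.S (Br.circ.S u)) := by
    intro u v z; simp [hpB]
  set ΦB : H ⊗[R] (H ⊗[R] H) →ₗ[R] H :=
    TensorProduct.lift Br.dot.mul ∘ₗ
      TensorProduct.map pB ((Br.circ.mul.flip h) ∘ₗ Br.circ.S) ∘ₗ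
      (TensorProduct.comm R H ((H ⊗[R] H) ⊗[R] H)).toLinearMap ∘ₗ
      LinearMap.lTensor H (LinearMap.rTensor H (comul (R := R))) with hΦB
  have hΦBt : ∀ x y z : H, ΦB (x ⊗ₜ[R] (y ⊗ₜ[R] z)) =
      ∑ j ∈ (ℛ R y).index,
        Br.dot.mul (Br.dot.mul
            (Br.circ.mul (Br.circ.S ((ℛ R y).right j)) z)
            (Br.dot.S (Br.circ.S ((ℛ R y).left j))))
          (Br.circ.mul (Br.circ.S x) h) := by
    intro x y z
    rw [hΦB]
    simp only [LinearMap.comp_apply, LinearMap.lTensor_tmul, LinearMap.rTensor_tmul,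
      ← (ℛ R y).eq, TensorProduct.sum_tmul, TensorProduct.tmul_sum, map_sum]
    refine Finset.sum_congr rfl fun j _ => ?_
    simp only [LinearEquiv.coe_coe, TensorProduct.comm_tmul, TensorProduct.map_tmul,
      TensorProduct.lift.tmul, LinearMap.comp_apply, LinearMap.flip_apply]
    rw [hpBt]
  calc ∑ i ∈ (ℛ R g).index,
        Br.circ.mul (Br.circ.S ((ℛ R g).left i)) (Br.dot.mul.flip h ((ℛ R g).right i))
      = ∑ i ∈ (ℛ R g).index, ∑ k ∈ (ℛ R ((ℛ R g).left i)).index,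
          ∑ j ∈ (ℛ R ((ℛ R ((ℛ R g).left i)).left k)).index,
            Br.dot.mul (Br.dot.mul
                (Br.circ.mul (Br.circ.S ((ℛ R ((ℛ R g).left i)).right k)) ((ℛ R g).right i))
                (Br.dot.S (Br.circ.S ((ℛ R ((ℛ R ((ℛ R g).left i)).left k)).right j))))
              (Br.circ.mul (Br.circ.S ((ℛ R ((ℛ R ((ℛ R g).left i)).left k)).left j)) h) := by
        refine Finset.sum_congr rfl fun i _ => ?_
        rw [LinearMap.flip_apply]
        rw [compat' Br (Br.circ.S ((ℛ R g).left i)) ((ℛ R g).right i) h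
          (TRepr Br (ℛ R ((ℛ R g).left i)))
          (fun k => TRepr Br (ℛ R ((ℛ R ((ℛ R g).left i)).left k)))]
        rfl
    _ = ∑ i ∈ (ℛ R g).index, ∑ k ∈ (ℛ R ((ℛ R g).left i)).index,
          ΦB (((ℛ R ((ℛ R g).left i)).left k) ⊗ₜ[R]
            (((ℛ R ((ℛ R g).left i)).right k) ⊗ₜ[R] (ℛ R g).right i)) := by
        refine Finset.sum_congr rfl fun i _ => ?_
        set ΦA : H ⊗[R] (H ⊗[R] H) →ₗ[R] H :=
          TensorProduct.lift Br.dot.mul ∘ₗ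
            TensorProduct.map
              (TensorProduct.lift Br.dot.mul ∘ₗ (TensorProduct.comm R H H).toLinearMap ∘ₗ
                TensorProduct.map (Br.dot.S ∘ₗ Br.circ.S)
                  ((Br.circ.mul.flip ((ℛ R g).right i)) ∘ₗ Br.circ.S))
              ((Br.circ.mul.flip h) ∘ₗ Br.circ.S) ∘ₗ
            (TensorProduct.comm R H (H ⊗[R] H)).toLinearMap with hΦA
        have hΦAt : ∀ x y z : H, ΦA (x ⊗ₜ[R] (y ⊗ₜ[R] z)) =
            Br.dot.mul (Br.dot.mul
                (Br.circ.mul (Br.circ.S z) ((ℛ R g).right i))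
                (Br.dot.S (Br.circ.S y)))
              (Br.circ.mul (Br.circ.S x) h) := by
          intro x y z; simp [hΦA]
        calc ∑ k ∈ (ℛ R ((ℛ R g).left i)).index,
              ∑ j ∈ (ℛ R ((ℛ R ((ℛ R g).left i)).left k)).index,
                Br.dot.mul (Br.dot.mul
                    (Br.circ.mul (Br.circ.S ((ℛ R ((ℛ R g).left i)).right k)) ((ℛ R g).right i))
                    (Br.dot.S (Br.circ.S ((ℛ R ((ℛ R ((ℛ R g).left i)).left k)).right j))))
                  (Br.circ.mul (Br.circ.S ((ℛ R ((ℛ R ((ℛ R g).left i)).left k)).left j)) h)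
            = ∑ k ∈ (ℛ R ((ℛ R g).left i)).index,
                ∑ j ∈ (ℛ R ((ℛ R ((ℛ R g).left i)).left k)).index,
                  ΦA ((ℛ R ((ℛ R ((ℛ R g).left i)).left k)).left j ⊗ₜ[R]
                    ((ℛ R ((ℛ R ((ℛ R g).left i)).left k)).right j ⊗ₜ[R]
                      (ℛ R ((ℛ R g).left i)).right k)) := by
              exact Finset.sum_congr rfl fun k _ => Finset.sum_congr rfl fun j _ =>
                (hΦAt _ _ _).symm
          _ = ∑ k ∈ (ℛ R ((ℛ R g).left i)).index,
                ∑ j ∈ (ℛ R ((ℛ R ((ℛ R g).left i)).right k)).index,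
                  ΦA ((ℛ R ((ℛ R g).left i)).left k ⊗ₜ[R]
                    ((ℛ R ((ℛ R ((ℛ R g).left i)).right k)).left j ⊗ₜ[R]
                      (ℛ R ((ℛ R ((ℛ R g).left i)).right k)).right j)) :=
              tri' ΦA (ℛ R ((ℛ R g).left i)) _ _
          _ = ∑ k ∈ (ℛ R ((ℛ R g).left i)).index,
                ΦB (((ℛ R ((ℛ R g).left i)).left k) ⊗ₜ[R]
                  (((ℛ R ((ℛ R g).left i)).right k) ⊗ₜ[R] (ℛ R g).right i)) := by
              refine Finset.sum_congr rfl fun k _ => ?_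
              rw [hΦBt]
              exact Finset.sum_congr rfl fun j _ => hΦAt _ _ _
    _ = ∑ i ∈ (ℛ R g).index, ∑ k ∈ (ℛ R ((ℛ R g).right i)).index,
          ΦB ((ℛ R g).left i ⊗ₜ[R]
            ((ℛ R ((ℛ R g).right i)).left k ⊗ₜ[R] (ℛ R ((ℛ R g).right i)).right k)) :=
        tri' ΦB (ℛ R g) _ _
    _ = ∑ i ∈ (ℛ R g).index,
          Br.dot.mul (Br.dot.S (Br.circ.S ((ℛ R g).right i)))
            (Br.circ.mul (Br.circ.S ((ℛ R g).left i)) h) := by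
        refine Finset.sum_congr rfl fun i _ => ?_
        set ΦC : H ⊗[R] (H ⊗[R] H) →ₗ[R] H :=
          (Br.dot.mul.flip (Br.circ.mul (Br.circ.S ((ℛ R g).left i)) h)) ∘ₗ
            TensorProduct.lift Br.dot.mul ∘ₗ (TensorProduct.comm R H H).toLinearMap ∘ₗ
              TensorProduct.map (Br.dot.S ∘ₗ Br.circ.S)
                (TensorProduct.lift Br.circ.mul ∘ₗ
                  TensorProduct.map Br.circ.S LinearMap.id) with hΦC
        have hΦCt : ∀ x y z : H, ΦC (x ⊗ₜ[R] (y ⊗ₜ[R] z)) =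
            Br.dot.mul (Br.dot.mul (Br.circ.mul (Br.circ.S y) z) (Br.dot.S (Br.circ.S x)))
              (Br.circ.mul (Br.circ.S ((ℛ R g).left i)) h) := by
          intro x y z; simp [hΦC]
        calc ∑ k ∈ (ℛ R ((ℛ R g).right i)).index,
              ΦB ((ℛ R g).left i ⊗ₜ[R]
                ((ℛ R ((ℛ R g).right i)).left k ⊗ₜ[R] (ℛ R ((ℛ R g).right i)).right k))
            = ∑ k ∈ (ℛ R ((ℛ R g).right i)).index,
                ∑ j ∈ (ℛ R ((ℛ R ((ℛ R g).right i)).left k)).index,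
                  ΦC ((ℛ R ((ℛ R ((ℛ R g).right i)).left k)).left j ⊗ₜ[R]
                    ((ℛ R ((ℛ R ((ℛ R g).right i)).left k)).right j ⊗ₜ[R]
                      (ℛ R ((ℛ R g).right i)).right k)) := by
              refine Finset.sum_congr rfl fun k _ => ?_
              rw [hΦBt]
              exact Finset.sum_congr rfl fun j _ => (hΦCt _ _ _).symm
          _ = ∑ k ∈ (ℛ R ((ℛ R g).right i)).index,
                ∑ j ∈ (ℛ R ((ℛ R ((ℛ R g).right i)).right k)).index,
                  ΦC ((ℛ R ((ℛ R g).right i)).left k ⊗ₜ[R]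
                    ((ℛ R ((ℛ R ((ℛ R g).right i)).right k)).left j ⊗ₜ[R]
                      (ℛ R ((ℛ R ((ℛ R g).right i)).right k)).right j)) :=
              tri' ΦC (ℛ R ((ℛ R g).right i)) _ _
          _ = ∑ k ∈ (ℛ R ((ℛ R g).right i)).index,
                counit (R := R) ((ℛ R ((ℛ R g).right i)).right k) •
                  Br.dot.mul (Br.dot.S (Br.circ.S ((ℛ R ((ℛ R g).right i)).left k)))
                    (Br.circ.mul (Br.circ.S ((ℛ R g).left i)) h) := by
              refine Finset.sum_congr rfl fun k _ => ?_
              rw [Finset.sum_congr rfl fun j _ => hΦCt _ _ _]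
              have hstep :
                  Br.dot.mul (Br.dot.mul
                      (∑ j ∈ (ℛ R ((ℛ R ((ℛ R g).right i)).right k)).index,
                        Br.circ.mul (Br.circ.S ((ℛ R ((ℛ R ((ℛ R g).right i)).right k)).left j))
                          ((ℛ R ((ℛ R ((ℛ R g).right i)).right k)).right j))
                      (Br.dot.S (Br.circ.S ((ℛ R ((ℛ R g).right i)).left k))))
                    (Br.circ.mul (Br.circ.S ((ℛ R g).left i)) h)
                  = ∑ j ∈ (ℛ R ((ℛ R ((ℛ R g).right i)).right k)).index,
                      Br.dot.mul (Br.dot.mul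
                          (Br.circ.mul
                            (Br.circ.S ((ℛ R ((ℛ R ((ℛ R g).right i)).right k)).left j))
                            ((ℛ R ((ℛ R ((ℛ R g).right i)).right k)).right j))
                          (Br.dot.S (Br.circ.S ((ℛ R ((ℛ R g).right i)).left k))))
                        (Br.circ.mul (Br.circ.S ((ℛ R g).left i)) h) := by
                simp only [map_sum, LinearMap.coe_sum, Finset.sum_apply]
              rw [← hstep, S_mul_left' Br.circ (ℛ R ((ℛ R ((ℛ R g).right i)).right k))]
              rw [Br_one_eq Br]
              simp only [map_smul, LinearMap.smul_apply, Br.dot.one_mul]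
          _ = Br.dot.mul (Br.dot.S (Br.circ.S ((ℛ R g).right i)))
                (Br.circ.mul (Br.circ.S ((ℛ R g).left i)) h) := by
              conv_rhs => rw [← sum_smul_counit' (ℛ R ((ℛ R g).right i))]
              rw [map_sum, map_sum, map_sum, LinearMap.coe_sum, Finset.sum_apply]
              refine Finset.sum_congr rfl fun k _ => ?_
              rw [map_smul, map_smul, map_smul, LinearMap.smul_apply]

theorem ii_map (h : H) :
    conv' Br.circ.mul LinearMap.id (ActM Br h ∘ₗ Br.circ.S) = Br.dot.mul.flip h := by
  rw [actT_eq Br h, ← conv'_assoc Br.circ.mul Br.circ.mul_assoc, HM_conv_id_S Br.circ,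
    conv'_cunit_left _ _ Br.circ.one_mul]

end Br

end Aux

/-- In a Hopf brace, with `g⇀h := S(g₍₁₎)·(g₍₂₎∘h)`, one has
`g∘h = g₍₁₎·(g₍₂₎⇀h)` and `g·h = g₍₁₎∘(T(g₍₂₎)⇀h)`. -/
theorem hopfBrace_circ_dot_via_action (Br : HopfBrace R H) (act : H → H → H)
    (hact : ∀ (g h : H) {ι : Type*} (r : Coalgebra.Repr R g ι),
      act g h = ∑ i ∈ r.index,
        Br.dot.mul (Br.dot.S (r.left i)) (Br.circ.mul (r.right i) h)) :
    (∀ (g h : H) {ι : Type*} (r : Coalgebra.Repr R g ι),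
      Br.circ.mul g h = ∑ i ∈ r.index, Br.dot.mul (r.left i) (act (r.right i) h)) ∧
    (∀ (g h : H) {ι : Type*} (r : Coalgebra.Repr R g ι),
      Br.dot.mul g h =
        ∑ i ∈ r.index, Br.circ.mul (r.left i) (act (Br.circ.S (r.right i)) h)) := by
  have hact' : ∀ x y : H, act x y = ActM Br y x := by
    intro x y
    rw [hact x y (liftRepr (ℛ R x)),
      liftRepr_sum (ℛ R x) (fun a b => Br.dot.mul (Br.dot.S a) (Br.circ.mul b y)),
      ActM_repr Br y (ℛ R x)]
  constructor
  · intro g h ι r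
    have h1 := LinearMap.congr_fun (i_map Br h) g
    rw [LinearMap.flip_apply, conv'_repr _ _ _ r] at h1
    rw [← h1]
    exact Finset.sum_congr rfl fun i _ => by rw [hact', LinearMap.id_apply]
  · intro g h ι r
    have h1 := LinearMap.congr_fun (ii_map Br h) g
    rw [LinearMap.flip_apply, conv'_repr _ _ _ r] at h1
    rw [← h1]
    refine Finset.sum_congr rfl fun i _ => ?_
    rw [hact', LinearMap.id_apply, LinearMap.comp_apply]
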